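/- Let G be an edge-colored graph, S a vertex cover of G, and suppose v, v' ∈ V∖S are equivalent with respect to S. Then for any u ∈ N(v), the positions G−u−v and G−u−v' have the same game value for Colored Arc Kayles: f_B(G−u−v) holds iff f_B(G−u−v') holds, and f_W(G−u−v) holds iff f_W(G−u−v') holds. -/

import Mathlib

/-- The three edge colors: gray, black, white. -/
inductive EColor : Type
  | gray | black | white
deriving DecidableEq

/-- An edge-colored graph on the vertex type `V`: `col u v` is the color of the
edge `{u,v}` if it is present, and `none` otherwise. -/
structure ECGraph (V : Type) where
  col : V → V → Option EColor
  symm : ∀ u v, col u v = col v u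
  loopless : ∀ v, col v v = none

mutual
  /-- `fB G A` : the first player B wins Colored Arc Kayles on the position of `G`
  induced by the vertex set `A`, B to move. B must pick a gray or black edge. -/
  def fB {V : Type} [DecidableEq V] (G : ECGraph V) (A : Finset V) : Prop :=
    ∃ u : {x // x ∈ A}, ∃ v : {x // x ∈ A},
      (G.col u.1 v.1 = some EColor.gray ∨ G.col u.1 v.1 = some EColor.black) ∧
      ¬ fW G (A \ {u.1, v.1})
  termination_by A.card
  decreasing_by
    have h1 : A \ {u.1, v.1} ⊆ A.erase u.1 := by
      intro x hx
      simp only [Finset.mem_sdiff, Finset.mem_insert, Finset.mem_singleton,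
        Finset.mem_erase] at hx ⊢
      tauto
    exact lt_of_le_of_lt (Finset.card_le_card h1) (Finset.card_erase_lt_of_mem u.2)

  /-- `fW G A` : the second player W wins the position `A` of `G`, W to move.
  W must pick a gray or white edge. -/
  def fW {V : Type} [DecidableEq V] (G : ECGraph V) (A : Finset V) : Prop :=
    ∃ u : {x // x ∈ A}, ∃ v : {x // x ∈ A},
      (G.col u.1 v.1 = some EColor.gray ∨ G.col u.1 v.1 = some EColor.white) ∧
      ¬ fB G (A \ {u.1, v.1})
  termination_by A.card
  decreasing_by
    have h1 : A \ {u.1, v.1} ⊆ A.erase u.1 := by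
      intro x hx
      simp only [Finset.mem_sdiff, Finset.mem_insert, Finset.mem_singleton,
        Finset.mem_erase] at hx ⊢
      tauto
    exact lt_of_le_of_lt (Finset.card_le_card h1) (Finset.card_erase_lt_of_mem u.2)
end

/-- The neighborhood of a vertex. -/
def Nbhd {V : Type} (G : ECGraph V) (v : V) : Set V := {u | G.col v u ≠ none}

/-- `S` is a vertex cover: every edge has at least one endpoint in `S`. -/
def IsVertexCover {V : Type} (G : ECGraph V) (S : Set V) : Prop :=
  ∀ u v : V, G.col u v ≠ none → u ∈ S ∨ v ∈ S

lemma card_sdiff_pair_lt {V : Type} [DecidableEq V] {A : Finset V} {u w : V}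
    (hu : u ∈ A) : (A \ {u, w}).card < A.card := by
  have h1 : A \ {u, w} ⊆ A.erase u := by
    intro x hx
    simp only [Finset.mem_sdiff, Finset.mem_insert, Finset.mem_singleton,
      Finset.mem_erase] at hx ⊢
    tauto
  exact lt_of_le_of_lt (Finset.card_le_card h1) (Finset.card_erase_lt_of_mem hu)

lemma fBW_image {V : Type} [DecidableEq V] (G : ECGraph V) :
    ∀ n : ℕ, ∀ σ : Equiv.Perm V, (∀ x y, G.col (σ x) (σ y) = G.col x y) →
    ∀ A : Finset V, A.card = n →
      (fB G A → fB G (A.image σ)) ∧ (fW G A → fW G (A.image σ)) := by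
  intro n
  induction n using Nat.strong_induction_on with
  | _ n ih =>
    intro σ hσ A hA
    have hσ' : ∀ x y, G.col (σ.symm x) (σ.symm y) = G.col x y := by
      intro x y
      have := hσ (σ.symm x) (σ.symm y)
      simpa using this.symm
    have himg : ∀ u w : V, (A.image σ) \ {σ u, σ w} = (A \ { u, w}).image σ := by
      intro u w
      rw [Finset.image_sdiff _ _ σ.injective]
      congr 1
      simp [Finset.image_insert]
    have hback : ∀ u w : V, ((A \ {u, w}).image σ).image σ.symm = A \ {u, w} := by
      intro u w
      rw [Finset.image_image]
      simp
    constructor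
    · intro hB
      rw [fB] at hB ⊢
      obtain ⟨⟨u, hu⟩, ⟨w, hw⟩, hcol, hnw⟩ := hB
      refine ⟨⟨σ u, Finset.mem_image_of_mem σ hu⟩, ⟨σ w, Finset.mem_image_of_mem σ hw⟩,
        by rwa [hσ], ?_⟩
      rw [himg]
      intro hcontra
      apply hnw
      have hlt : ((A \ {u, w}).image σ).card < n := by
        rw [Finset.card_image_of_injective _ σ.injective, ← hA]
        exact card_sdiff_pair_lt hu
      have := ((ih _ hlt σ.symm hσ' _ rfl).2 hcontra)
      rwa [hback] at this
    · intro hW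
      rw [fW] at hW ⊢
      obtain ⟨⟨u, hu⟩, ⟨w, hw⟩, hcol, hnb⟩ := hW
      refine ⟨⟨σ u, Finset.mem_image_of_mem σ hu⟩, ⟨σ w, Finset.mem_image_of_mem σ hw⟩,
        by rwa [hσ], ?_⟩
      rw [himg]
      intro hcontra
      apply hnb
      have hlt : ((A \ {u, w}).image σ).card < n := by
        rw [Finset.card_image_of_injective _ σ.injective, ← hA]
        exact card_sdiff_pair_lt hu
      have := ((ih _ hlt σ.symm hσ' _ rfl).1 hcontra)
      rwa [hback] at this

/-- If `v, v' ∉ S` are equivalent with respect to a vertex cover `S` of `G`, then for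
any `u ∈ N(v)` the positions `G − u − v` and `G − u − v'` have the same game value for
Colored Arc Kayles. -/
theorem equivalent_vertices_same_game_value {V : Type} [Fintype V] [DecidableEq V]
    (G : ECGraph V) (S : Set V) (hS : IsVertexCover G S)
    (v v' : V) (hv : v ∉ S) (hv' : v' ∉ S)
    (hN : Nbhd G v = Nbhd G v')
    (hc : ∀ u ∈ Nbhd G v, G.col u v = G.col u v')
    (u : V) (hu : u ∈ Nbhd G v) :
    (fB G (Finset.univ \ {u, v}) ↔ fB G (Finset.univ \ {u, v'})) ∧
    (fW G (Finset.univ \ {u, v}) ↔ fW G (Finset.univ \ {u, v'})) := by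
  set σ : Equiv.Perm V := Equiv.swap v v' with hσdef
  have hcolv : ∀ x, G.col v x = G.col v' x := by
    intro x
    by_cases hx : G.col v x = none
    · have hx' : x ∉ Nbhd G v' := by rw [← hN]; simpa [Nbhd] using hx
      simp only [Nbhd, Set.mem_setOf_eq, not_not] at hx'
      rw [hx, hx']
    · have hxN : x ∈ Nbhd G v := hx
      rw [G.symm v x, G.symm v' x]
      exact hc x hxN
  have hA : ∀ x y, G.col (σ x) y = G.col x y := by
    intro x y
    rcases eq_or_ne x v with rfl | hxv
    · rw [hσdef, Equiv.swap_apply_left]; exact (hcolv y).symm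
    · rcases eq_or_ne x v' with rfl | hxv'
      · rw [hσdef, Equiv.swap_apply_right]; exact hcolv y
      · rw [hσdef, Equiv.swap_apply_of_ne_of_ne hxv hxv']
  have hσcol : ∀ x y, G.col (σ x) (σ y) = G.col x y := by
    intro x y
    rw [hA, G.symm, hA, G.symm]
  have huv : u ≠ v := by
    intro h; subst h
    exact hu (G.loopless u)
  have hvv' : G.col v v' = none := by
    rw [hcolv v']
    exact G.loopless v'
  have huv' : u ≠ v' := by
    intro h; subst h
    exact hu hvv'
  have hσu : σ u = u := Equiv.swap_apply_of_ne_of_ne huv huv'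
  have himg1 : (Finset.univ \ {u, v} : Finset V).image σ = Finset.univ \ {u, v'} := by
    rw [Finset.image_sdiff _ _ σ.injective]
    congr 1
    · exact Finset.image_univ_equiv σ
    · simp [Finset.image_insert, hσu, hσdef, Equiv.swap_apply_of_ne_of_ne huv huv']
  have himg2 : (Finset.univ \ {u, v'} : Finset V).image σ = Finset.univ \ {u, v} := by
    rw [Finset.image_sdiff _ _ σ.injective]
    congr 1
    · exact Finset.image_univ_equiv σ
    · simp [Finset.image_insert, hσu, hσdef, Equiv.swap_apply_of_ne_of_ne huv huv']
  have key1 := fBW_image G (Finset.univ \ {u, v} : Finset V).card σ hσcol _ rfl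
  have key2 := fBW_image G (Finset.univ \ {u, v'} : Finset V).card σ hσcol _ rfl
  rw [himg1] at key1
  rw [himg2] at key2
  exact ⟨⟨key1.1, key2.1⟩, ⟨key1.2, key2.2⟩⟩
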